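/- Let R be an F-finite Noetherian reduced ring of characteristic p > 0 and x ∈ R a non-zerodivisor such that the pair (R, x) is F-pure. Then R_x is generated by 1/x as a D_R-module, where D_R = ⋃_{q=pᵉ} End_{R^q}(R). -/

import Mathlib

/-!
Statement 17: Let `R` be an F-finite Noetherian reduced ring of characteristic `p > 0`
and `x ∈ R` a non-zerodivisor such that the pair `(R, x)` is F-pure.  Then `R_x` is
generated by `1/x` as a `D_R`-module, where `D_R = ⋃_{q=pᵉ} End_{R^q}(R)`.
-/

universe u

section Defs

/-- `R` is F-finite: `¹R` is a finitely generated `R`-module. -/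
def FFinite (p : ℕ) (R : Type u) [CommRing R] : Prop :=
  ∃ (n : ℕ) (g : Fin n → R), ∀ r : R, ∃ c : Fin n → R, r = ∑ i, c i ^ p * g i

/-- The pair `(R, x)` is F-pure: for every `q = pᵉ` the inclusion
`x^{(q-1)/q} R ↪ R^{1/q}` splits; equivalently, for every `e` there is an `R`-linear map
`ᵉR → R` sending `x^{pᵉ - 1}` to `1`. -/
def FPurePair (p : ℕ) (R : Type u) [CommRing R] (x : R) : Prop :=
  ∀ e : ℕ, ∃ φ : R →+ R,
    (∀ r y : R, φ (r ^ p ^ e * y) = r * φ y) ∧ φ (x ^ (p ^ e - 1)) = 1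

end Defs

/-- Let `R` be an F-finite Noetherian reduced ring of characteristic
`p > 0` and `x ∈ R` a non-zerodivisor such that the pair `(R, x)` is F-pure.  Then `R_x`
is generated by `1/x` as a `D_R`-module, where `D_R = ⋃_{q=pᵉ} End_{R^q}(R)`: every
`y ∈ R_x` equals `δ(1/x)` for some `R^{pᵉ}`-linear `δ : R → R`.  (Such a `δ` acts on
`R_x` by `δ(z/s) = δ(s^{pᵉ-1}z)/s^{pᵉ}`, so `δ(1/x) = y` reads
`δ(x^{pᵉ-1}) = y·x^{pᵉ}` in `R_x`.) -/
theorem stmt17 {R : Type u} [CommRing R] [IsNoetherianRing R] [IsReduced R]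
    (p : ℕ) (hp : p.Prime) [CharP R p] (hFF : FFinite p R)
    (x : R) (hx : x ∈ nonZeroDivisors R) (hFP : FPurePair p R x) :
    ∀ y : Localization.Away x,
      ∃ (e : ℕ) (δ : R →+ R),
        (∀ r z : R, δ (r ^ p ^ e * z) = r ^ p ^ e * δ z) ∧
        algebraMap R (Localization.Away x) (δ (x ^ (p ^ e - 1))) =
          y * algebraMap R (Localization.Away x) x ^ p ^ e := by
  haveI := Fact.mk hp
  intro y
  obtain ⟨n, r, hy⟩ := IsLocalization.Away.surj (S := Localization.Away x) x y
  obtain ⟨φ, hφ1, hφ2⟩ := hFP n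
  have hq : n ≤ p ^ n := (Nat.lt_pow_self (n := n) hp.one_lt).le
  refine ⟨n, AddMonoidHom.mk' (fun z => r * x ^ (p ^ n - n) * (φ z) ^ p ^ n) ?_, ?_, ?_⟩
  · intro a b
    simp only [map_add, add_pow_char_pow, mul_add]
  · intro a z
    simp only [AddMonoidHom.mk'_apply, hφ1, mul_pow]
    ring
  · simp only [AddMonoidHom.mk'_apply, hφ2, one_pow, mul_one, map_mul, map_pow]
    have hpow : x ^ n * x ^ (p ^ n - n) = x ^ p ^ n := by
      rw [← pow_add]; congr 1; omega
    rw [← hy, mul_assoc, ← map_pow, ← map_pow, ← map_mul, hpow, map_pow]
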